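/- Let k be a field, R = k[x,y], R^{S₂} ⊆ R the subalgebra of symmetric polynomials, B = R ⊗_{R^{S₂}} R, and br : B → R the multiplication map f⊗g ↦ fg. Set v := y⊗1 − 1⊗y ∈ B. Then: (i) the kernel of br equals R·v and is free of rank one as a left R-module with basis {v}; (ii) x·v = v·y in B, i.e. left multiplication by x and right multiplication by y agree on v. -/

import Mathlib

open MvPolynomial TensorProduct

set_option maxHeartbeats 2000000
set_option synthInstance.maxHeartbeats 1000000

/-- `R = k[x,y]` (`x = X 0`, `y = X 1`). -/
noncomputable abbrev stmt11R (k : Type) [Field k] := MvPolynomial (Fin 2) k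

/-- `R^{S₂}`, the subalgebra of symmetric polynomials. -/
noncomputable abbrev stmt11S (k : Type) [Field k] : Subalgebra k (stmt11R k) :=
  MvPolynomial.symmetricSubalgebra (Fin 2) k

/-- The Soergel bimodule `B = R ⊗_{R^{S₂}} R`. -/
noncomputable abbrev stmt11B (k : Type) [Field k] :=
  (stmt11R k) ⊗[↥(stmt11S k)] (stmt11R k)

namespace Stmt11Aux

variable (k : Type) [Field k]

/-- substitute both variables by `y` -/
noncomputable def sgm : stmt11R k →ₐ[k] stmt11R k := aeval (fun _ => X 1)

lemma dvd_sub_sgm (p : stmt11R k) : (X 0 - X 1 : stmt11R k) ∣ p - sgm k p := by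
  induction p using MvPolynomial.induction_on with
  | C a => simp [sgm]
  | add p q hp hq =>
      have : p + q - sgm k (p + q) = (p - sgm k p) + (q - sgm k q) := by
        simp [map_add]; ring
      rw [this]; exact dvd_add hp hq
  | mul_X p i hp =>
      have : p * X i - sgm k (p * X i)
          = (p - sgm k p) * X i + sgm k p * (X i - sgm k (X i)) := by
        simp [map_mul]; ring
      rw [this]
      refine dvd_add (Dvd.dvd.mul_right hp _) (Dvd.dvd.mul_left ?_ _)
      fin_cases i
      · simp [sgm]
      · simp [sgm]

lemma swap_dvd (p : stmt11R k) :
    (X 0 - X 1 : stmt11R k) ∣ rename (Equiv.swap 0 1) p - p := by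
  have h := dvd_sub_sgm k (rename (Equiv.swap 0 1) p - p)
  have hs : sgm k (rename (Equiv.swap 0 1) p) = sgm k p := by
    unfold sgm
    rw [aeval_rename]
    rfl
  simpa [map_sub, hs] using h

lemma xy_ne : (X 0 - X 1 : stmt11R k) ≠ 0 :=
  sub_ne_zero.mpr (fun h => absurd (X_injective h) (by decide))

/-- Demazure-type operator: the unique `q` with `(X0 - X1) * q = swap p - p`. -/
noncomputable def dem (p : stmt11R k) : stmt11R k := (swap_dvd k p).choose

lemma dem_spec (p : stmt11R k) :
    (X 0 - X 1 : stmt11R k) * dem k p = rename (Equiv.swap 0 1) p - p :=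
  ((swap_dvd k p).choose_spec).symm

lemma dem_unique {p q : stmt11R k}
    (h : (X 0 - X 1 : stmt11R k) * q = rename (Equiv.swap 0 1) p - p) :
    dem k p = q :=
  mul_left_cancel₀ (xy_ne k) (by rw [dem_spec, h])

lemma dem_one : dem k 1 = 0 := dem_unique k (by simp)

lemma dem_X1 : dem k (X 1) = 1 := dem_unique k (by simp [rename_X])

lemma dem_add (p q : stmt11R k) : dem k (p + q) = dem k p + dem k q :=
  dem_unique k (by rw [mul_add, dem_spec, dem_spec, map_add]; ring)

lemma dem_symm_mul (s p : stmt11R k) (hs : s.IsSymmetric) :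
    dem k (s * p) = s * dem k p :=
  dem_unique k (by rw [map_mul, hs (Equiv.swap 0 1)]; rw [mul_left_comm, dem_spec]; ring)

lemma perm2 : ∀ σ : Equiv.Perm (Fin 2), σ = 1 ∨ σ = Equiv.swap 0 1 := by decide

lemma dem_isSymm (p : stmt11R k) : (dem k p).IsSymmetric := by
  intro σ
  rcases perm2 σ with h | h
  · simp [h]
  subst h
  have hss : rename (⇑(Equiv.swap (0:Fin 2) 1)) (rename (⇑(Equiv.swap (0:Fin 2) 1)) p) = p := by
    rw [rename_rename, show (⇑(Equiv.swap (0:Fin 2) 1)) ∘ ⇑(Equiv.swap (0:Fin 2) 1) = id by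
      ext i; simp, rename_id, AlgHom.id_apply]
  have h0 := congrArg (rename ⇑(Equiv.swap (0:Fin 2) 1)) (dem_spec k p)
  rw [map_mul, map_sub, map_sub, rename_X, rename_X, Equiv.swap_apply_left,
    Equiv.swap_apply_right, hss] at h0
  refine mul_left_cancel₀ (xy_ne k) ?_
  linear_combination -h0 - dem_spec k p

lemma rest_isSymm (p : stmt11R k) : (p - dem k p * X 1).IsSymmetric := by
  intro σ
  rcases perm2 σ with h | h
  · simp [h]
  subst h
  rw [map_sub, map_mul, dem_isSymm k p (Equiv.swap 0 1), rename_X, Equiv.swap_apply_right]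
  linear_combination -dem_spec k p

lemma tmul_symm (s a c : stmt11R k) (hs : s.IsSymmetric) :
    a ⊗ₜ[↥(stmt11S k)] (s * c) = (s * a) ⊗ₜ[↥(stmt11S k)] c := by
  have hmem : s ∈ stmt11S k := (mem_symmetricSubalgebra s).mpr hs
  rw [show s * a = (⟨s, hmem⟩ : ↥(stmt11S k)) • a from rfl,
    show s * c = (⟨s, hmem⟩ : ↥(stmt11S k)) • c from rfl]
  exact (TensorProduct.smul_tmul (R := ↥(stmt11S k)) (R' := ↥(stmt11S k))
    (⟨s, hmem⟩ : ↥(stmt11S k)) a c).symm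

/-- `dem` as an `S`-linear map. -/
noncomputable def demL : stmt11R k →ₗ[↥(stmt11S k)] stmt11R k where
  toFun := dem k
  map_add' := dem_add k
  map_smul' s p := by
    rw [RingHom.id_apply, Subalgebra.smul_def, Subalgebra.smul_def, smul_eq_mul, smul_eq_mul]
    exact dem_symm_mul k _ p ((mem_symmetricSubalgebra _).mp s.2)

/-- `φ : B → R`, `a ⊗ c ↦ a * dem c`. -/
noncomputable def phi : stmt11B k →ₗ[↥(stmt11S k)] stmt11R k :=
  TensorProduct.lift ((LinearMap.mul (↥(stmt11S k)) (stmt11R k)).compl₂ (demL k))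

lemma phi_tmul (a c : stmt11R k) : phi k (a ⊗ₜ[↥(stmt11S k)] c) = a * dem k c := by
  exact TensorProduct.lift.tmul (f' := (LinearMap.mul (↥(stmt11S k)) (stmt11R k)).compl₂ (demL k)) a c

/-- key identity on pure tensors -/
lemma key_tensor (a c : stmt11R k) :
    a ⊗ₜ[↥(stmt11S k)] c
      = (a * c) ⊗ₜ[↥(stmt11S k)] (1 : stmt11R k)
        - ((a * dem k c) ⊗ₜ[↥(stmt11S k)] (1 : stmt11R k))
          * ((X 1 : stmt11R k) ⊗ₜ[↥(stmt11S k)] (1 : stmt11R k)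
              - (1 : stmt11R k) ⊗ₜ[↥(stmt11S k)] (X 1 : stmt11R k)) := by
  have e1 : a ⊗ₜ[↥(stmt11S k)] ((c - dem k c * X 1) * 1)
      = ((c - dem k c * X 1) * a) ⊗ₜ[↥(stmt11S k)] (1 : stmt11R k) :=
    tmul_symm k _ a 1 (rest_isSymm k c)
  have e2 : a ⊗ₜ[↥(stmt11S k)] (dem k c * X 1)
      = (dem k c * a) ⊗ₜ[↥(stmt11S k)] (X 1 : stmt11R k) :=
    tmul_symm k _ a _ (dem_isSymm k c)
  rw [mul_one] at e1
  have hc : a ⊗ₜ[↥(stmt11S k)] c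
      = a ⊗ₜ[↥(stmt11S k)] (c - dem k c * X 1) + a ⊗ₜ[↥(stmt11S k)] (dem k c * X 1) := by
    rw [← tmul_add]
    congr 1
    ring
  have e3 : ((a * dem k c) ⊗ₜ[↥(stmt11S k)] (1 : stmt11R k))
          * ((X 1 : stmt11R k) ⊗ₜ[↥(stmt11S k)] (1 : stmt11R k)
              - (1 : stmt11R k) ⊗ₜ[↥(stmt11S k)] (X 1 : stmt11R k))
      = (a * dem k c * X 1) ⊗ₜ[↥(stmt11S k)] (1 : stmt11R k)
        - (a * dem k c) ⊗ₜ[↥(stmt11S k)] (X 1 : stmt11R k) := by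
    rw [mul_sub ((a * dem k c) ⊗ₜ[↥(stmt11S k)] (1:stmt11R k)),
      Algebra.TensorProduct.tmul_mul_tmul, Algebra.TensorProduct.tmul_mul_tmul,
      mul_one, one_mul, mul_one]
  rw [hc, e1, e2, e3, sub_mul, sub_tmul]
  rw [show (a * c) ⊗ₜ[↥(stmt11S k)] (1:stmt11R k) = (c * a) ⊗ₜ[↥(stmt11S k)] (1:stmt11R k) by
      rw [mul_comm],
    show a * dem k c * X 1 = dem k c * X 1 * a by ring,
    show a * dem k c = dem k c * a by ring]
  abel

lemma general (br : stmt11B k →ₗ[k] stmt11R k)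
    (hbr : ∀ f g : stmt11R k, br (f ⊗ₜ[↥(stmt11S k)] g) = f * g) (b : stmt11B k) :
    b = (br b) ⊗ₜ[↥(stmt11S k)] (1 : stmt11R k)
        - ((phi k b) ⊗ₜ[↥(stmt11S k)] (1 : stmt11R k))
          * ((X 1 : stmt11R k) ⊗ₜ[↥(stmt11S k)] (1 : stmt11R k)
              - (1 : stmt11R k) ⊗ₜ[↥(stmt11S k)] (X 1 : stmt11R k)) := by
  induction b using TensorProduct.induction_on with
  | zero => simp
  | tmul a c => rw [hbr, phi_tmul]; exact key_tensor k a c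
  | add b1 b2 h1 h2 =>
      rw [map_add, map_add, add_tmul, add_tmul, add_mul]
      calc b1 + b2
          = ((br b1) ⊗ₜ[↥(stmt11S k)] (1 : stmt11R k)
              - ((phi k b1) ⊗ₜ[↥(stmt11S k)] (1 : stmt11R k))
                * ((X 1 : stmt11R k) ⊗ₜ[↥(stmt11S k)] (1 : stmt11R k)
                    - (1 : stmt11R k) ⊗ₜ[↥(stmt11S k)] (X 1 : stmt11R k)))
            + ((br b2) ⊗ₜ[↥(stmt11S k)] (1 : stmt11R k)
              - ((phi k b2) ⊗ₜ[↥(stmt11S k)] (1 : stmt11R k))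
                * ((X 1 : stmt11R k) ⊗ₜ[↥(stmt11S k)] (1 : stmt11R k)
                    - (1 : stmt11R k) ⊗ₜ[↥(stmt11S k)] (X 1 : stmt11R k))) := by
            rw [← h1, ← h2]
        _ = _ := by abel

lemma e1_symm : (X 0 + X 1 : stmt11R k).IsSymmetric := by
  intro σ
  rcases perm2 σ with h | h <;> subst h <;>
    simp [rename_X, Equiv.swap_apply_left, Equiv.swap_apply_right, add_comm]

lemma e2_symm : (X 0 * X 1 : stmt11R k).IsSymmetric := by
  intro σ
  rcases perm2 σ with h | h <;> subst h <;>
    simp [rename_X, Equiv.swap_apply_left, Equiv.swap_apply_right, mul_comm]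

end Stmt11Aux

open Stmt11Aux in
theorem stmt_11 (k : Type) [Field k]
    (br : stmt11B k →ₗ[k] stmt11R k)
    (hbr : ∀ f g : stmt11R k, br (f ⊗ₜ[↥(stmt11S k)] g) = f * g) :
    (∀ b : stmt11B k,
        br b = 0 ↔
          ∃ f : stmt11R k,
            b = (f ⊗ₜ[↥(stmt11S k)] (1 : stmt11R k))
              * ((X 1 : stmt11R k) ⊗ₜ[↥(stmt11S k)] (1 : stmt11R k)
                  - (1 : stmt11R k) ⊗ₜ[↥(stmt11S k)] (X 1 : stmt11R k))) ∧
    (∀ f : stmt11R k,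
        (f ⊗ₜ[↥(stmt11S k)] (1 : stmt11R k))
            * ((X 1 : stmt11R k) ⊗ₜ[↥(stmt11S k)] (1 : stmt11R k)
                - (1 : stmt11R k) ⊗ₜ[↥(stmt11S k)] (X 1 : stmt11R k)) = 0
          → f = 0) ∧
    ((X 0 : stmt11R k) ⊗ₜ[↥(stmt11S k)] (1 : stmt11R k))
        * ((X 1 : stmt11R k) ⊗ₜ[↥(stmt11S k)] (1 : stmt11R k)
            - (1 : stmt11R k) ⊗ₜ[↥(stmt11S k)] (X 1 : stmt11R k))
      = ((1 : stmt11R k) ⊗ₜ[↥(stmt11S k)] (X 1 : stmt11R k))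
        * ((X 1 : stmt11R k) ⊗ₜ[↥(stmt11S k)] (1 : stmt11R k)
            - (1 : stmt11R k) ⊗ₜ[↥(stmt11S k)] (X 1 : stmt11R k)) := by
  have expand : ∀ f : stmt11R k,
      (f ⊗ₜ[↥(stmt11S k)] (1 : stmt11R k))
          * ((X 1 : stmt11R k) ⊗ₜ[↥(stmt11S k)] (1 : stmt11R k)
              - (1 : stmt11R k) ⊗ₜ[↥(stmt11S k)] (X 1 : stmt11R k))
        = (f * X 1) ⊗ₜ[↥(stmt11S k)] (1 : stmt11R k)
          - f ⊗ₜ[↥(stmt11S k)] (X 1 : stmt11R k) := by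
    intro f
    rw [mul_sub (f ⊗ₜ[↥(stmt11S k)] (1 : stmt11R k)),
      Algebra.TensorProduct.tmul_mul_tmul, Algebra.TensorProduct.tmul_mul_tmul,
      mul_one, one_mul, mul_one]
  refine ⟨?_, ?_, ?_⟩
  · intro b
    constructor
    · intro hb
      refine ⟨-(phi k b), ?_⟩
      have hgen := general k br hbr b
      rw [hb, zero_tmul, zero_sub] at hgen
      have hnm : ∀ (u w : stmt11B k), (-u) * w = -(u * w) := fun u w => by ring
      rw [neg_tmul, hnm]
      exact hgen
    · rintro ⟨f, rfl⟩
      rw [expand, map_sub, hbr, hbr, mul_one]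
      ring
  · intro f hf
    have h0 := congrArg (phi k) hf
    rw [expand, map_sub, phi_tmul, phi_tmul, dem_one, dem_X1, map_zero] at h0
    have h1 : -f = 0 := by linear_combination h0
    exact neg_eq_zero.mp h1
  · rw [expand, mul_sub ((1:stmt11R k) ⊗ₜ[↥(stmt11S k)] (X 1 : stmt11R k)),
      Algebra.TensorProduct.tmul_mul_tmul, Algebra.TensorProduct.tmul_mul_tmul,
      one_mul, mul_one, one_mul]
    -- goal: (X0*X1)⊗1 - X0⊗X1 = X1⊗X1 - 1⊗(X1*X1)
    have a1 : (1 : stmt11R k) ⊗ₜ[↥(stmt11S k)] (X 0 * X 1 : stmt11R k)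
        = ((X 0 * X 1 : stmt11R k) * 1) ⊗ₜ[↥(stmt11S k)] (1 : stmt11R k) := by
      have := tmul_symm k (X 0 * X 1) 1 1 (e2_symm k)
      simpa using this
    have a2 : (1 : stmt11R k) ⊗ₜ[↥(stmt11S k)] ((X 0 + X 1 : stmt11R k) * X 1)
        = ((X 0 + X 1 : stmt11R k) * 1) ⊗ₜ[↥(stmt11S k)] (X 1 : stmt11R k) :=
      tmul_symm k (X 0 + X 1) 1 (X 1) (e1_symm k)
    rw [mul_one] at a1 a2
    have a3 : (X 0 : stmt11R k) ⊗ₜ[↥(stmt11S k)] (X 1 : stmt11R k)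
        = (X 0 + X 1 : stmt11R k) ⊗ₜ[↥(stmt11S k)] (X 1 : stmt11R k)
          - (X 1 : stmt11R k) ⊗ₜ[↥(stmt11S k)] (X 1 : stmt11R k) := by
      rw [← sub_tmul]
      congr 1
      ring
    rw [a3, ← a1, ← a2]
    have a4 : (1 : stmt11R k) ⊗ₜ[↥(stmt11S k)] (X 0 * X 1 : stmt11R k)
          - (1 : stmt11R k) ⊗ₜ[↥(stmt11S k)] ((X 0 + X 1 : stmt11R k) * X 1)
        = - ((1 : stmt11R k) ⊗ₜ[↥(stmt11S k)] (X 1 * X 1 : stmt11R k)) := by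
      rw [← tmul_sub, ← tmul_neg]
      congr 1
      ring
    linear_combination (norm := abel) a4
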